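/- Fix a positive integer m. For all complex q, z with |q| < 1, the sum of z^{|S|} q^{Σ_{s∈S} s} over all finite subsets S of the positive integers satisfying b_S(m) = m equals ((-zq;q)_m/(q;q)_m) z^m q^{m(3m+1)/2}. -/

import Mathlib

open Finset

namespace RankMAux

variable (m : ℕ)

def sm (i : Fin m) : ℕ+ := ⟨(i : ℕ) + 1, Nat.succ_pos _⟩

@[simp] lemma sm_coe (i : Fin m) : (sm m i : ℕ) = (i : ℕ) + 1 := rfl

lemma sm_le (i : Fin m) : (sm m i : ℕ) ≤ m := i.isLt

lemma sm_injective : Function.Injective (sm m) := by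
  intro i j h
  have : (i : ℕ) + 1 = (j : ℕ) + 1 := congrArg (fun x : ℕ+ => (x : ℕ)) h
  exact Fin.ext (by omega)

def dd (d : Fin m → ℕ) (k : ℕ) : ℕ := if h : k < m then d ⟨k, h⟩ else 0

@[simp] lemma dd_fin (d : Fin m → ℕ) (i : Fin m) : dd m d (i : ℕ) = d i := by
  simp [dd, i.isLt]

def bgv (d : Fin m → ℕ) (i : Fin m) : ℕ :=
  m + 1 + (i : ℕ) + ∑ j ∈ Finset.range ((i : ℕ) + 1), dd m d j

lemma m_lt_bgv (d : Fin m → ℕ) (i : Fin m) : m < bgv m d i := by unfold bgv; omega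

def bg (d : Fin m → ℕ) (i : Fin m) : ℕ+ :=
  ⟨bgv m d i, lt_of_le_of_lt (Nat.zero_le m) (m_lt_bgv m d i)⟩

@[simp] lemma bg_coe (d : Fin m → ℕ) (i : Fin m) : (bg m d i : ℕ) = bgv m d i := rfl

lemma bgv_strictMono (d : Fin m → ℕ) : StrictMono (bgv m d) := by
  intro i j hij
  have hsub : Finset.range ((i : ℕ) + 1) ⊆ Finset.range ((j : ℕ) + 1) :=
    Finset.range_subset_range.2 (by exact_mod_cast Nat.succ_le_succ hij.le)
  have h1 := Finset.sum_le_sum_of_subset (f := dd m d) hsub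
  have h2 : (i : ℕ) < (j : ℕ) := hij
  unfold bgv
  omega

lemma bg_strictMono (d : Fin m → ℕ) : StrictMono (bg m d) := by
  intro i j hij
  have := bgv_strictMono m d hij
  exact_mod_cast this

def toSet (A : Finset (Fin m)) (d : Fin m → ℕ) : Finset ℕ+ :=
  A.image (sm m) ∪ Finset.image (bg m d) Finset.univ

lemma filter_toSet_big (A : Finset (Fin m)) (d : Fin m → ℕ) :
    (toSet m A d).filter (fun s : ℕ+ => m < (s : ℕ)) = Finset.image (bg m d) Finset.univ := by
  ext x
  simp only [toSet, Finset.mem_filter, Finset.mem_union, Finset.mem_image, Finset.mem_univ,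
    true_and]
  constructor
  · rintro ⟨⟨i, hi, rfl⟩ | h, hx⟩
    · exact absurd hx (by simpa using sm_le m i)
    · exact h
  · rintro ⟨i, rfl⟩
    exact ⟨Or.inr ⟨i, rfl⟩, m_lt_bgv m d i⟩

lemma filter_toSet_small (A : Finset (Fin m)) (d : Fin m → ℕ) :
    (toSet m A d).filter (fun s : ℕ+ => ¬ m < (s : ℕ)) = A.image (sm m) := by
  ext x
  simp only [toSet, Finset.mem_filter, Finset.mem_union, Finset.mem_image, Finset.mem_univ,
    true_and]
  constructor
  · rintro ⟨⟨i, hi, rfl⟩ | ⟨i, rfl⟩, hx⟩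
    · exact ⟨i, hi, rfl⟩
    · exact absurd (m_lt_bgv m d i) hx
  · rintro ⟨i, hi, rfl⟩
    exact ⟨Or.inl ⟨i, hi, rfl⟩, by simpa using sm_le m i⟩

lemma card_big (d : Fin m → ℕ) : (Finset.image (bg m d) Finset.univ).card = m := by
  rw [Finset.card_image_of_injective _ (bg_strictMono m d).injective, Finset.card_univ,
    Fintype.card_fin]

def F (p : Finset (Fin m) × (Fin m → ℕ)) :
    {S : Finset ℕ+ // (S.filter (fun s : ℕ+ => m < (s : ℕ))).card = m} :=
  ⟨toSet m p.1 p.2, by rw [filter_toSet_big]; exact card_big m p.2⟩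

lemma bgv_inj {d d' : Fin m → ℕ} (h : ∀ i : Fin m, bgv m d i = bgv m d' i) : d = d' := by
  have hP : ∀ k, k < m → ∑ j ∈ Finset.range (k + 1), dd m d j
      = ∑ j ∈ Finset.range (k + 1), dd m d' j := by
    intro k hk
    have := h ⟨k, hk⟩
    unfold bgv at this
    simpa using this
  have hdd : ∀ k, k < m → dd m d k = dd m d' k := by
    intro k hk
    cases k with
    | zero => simpa using hP 0 hk
    | succ n =>
        have h1 := hP (n + 1) hk
        have h0 := hP n (by omega)
        rw [Finset.sum_range_succ (dd m d), Finset.sum_range_succ (dd m d')] at h1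
        omega
  funext i
  have := hdd (i : ℕ) i.isLt
  simpa using this

lemma F_injective : Function.Injective (F m) := by
  rintro ⟨A, d⟩ ⟨A', d'⟩ h
  have hS : toSet m A d = toSet m A' d' := congrArg Subtype.val h
  have hsmall : A.image (sm m) = A'.image (sm m) := by
    rw [← filter_toSet_small m A d, ← filter_toSet_small m A' d', hS]
  have hA : A = A' := Finset.image_injective (sm_injective m) hsmall
  have hbig : Finset.image (bg m d) Finset.univ = Finset.image (bg m d') Finset.univ := by
    rw [← filter_toSet_big m A d, ← filter_toSet_big m A' d', hS]
  have hcard : (Finset.image (bg m d) Finset.univ).card = m := card_big m d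
  have h1 : bg m d = (Finset.image (bg m d) Finset.univ).orderEmbOfFin hcard :=
    Finset.orderEmbOfFin_unique hcard
      (fun x => Finset.mem_image_of_mem _ (Finset.mem_univ x)) (bg_strictMono m d)
  have h2 : bg m d' = (Finset.image (bg m d) Finset.univ).orderEmbOfFin hcard :=
    Finset.orderEmbOfFin_unique hcard
      (fun x => hbig ▸ Finset.mem_image_of_mem _ (Finset.mem_univ x)) (bg_strictMono m d')
  have hbg : bg m d = bg m d' := h1.trans h2.symm
  have hd : d = d' := bgv_inj m (fun i => by
    have := congrFun hbg i
    exact congrArg (fun x : ℕ+ => (x : ℕ)) this)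
  simp [hA, hd]


lemma F_surjective : Function.Surjective (F m) := by
  rintro ⟨S, hS⟩
  classical
  set big := S.filter (fun s : ℕ+ => m < (s : ℕ)) with hbigdef
  have hc : big.card = m := hS
  set e := big.orderEmbOfFin hc with he
  have hmem : ∀ i, e i ∈ big := fun i => Finset.orderEmbOfFin_mem big hc i
  have hmono : StrictMono e := (big.orderEmbOfFin hc).strictMono
  set t : Fin m → ℕ := fun i => ((e i : ℕ+) : ℕ) with ht
  have htmono : StrictMono t := fun i j hij => by
    have := hmono hij
    exact_mod_cast this
  have htm : ∀ i, m < t i := fun i => (Finset.mem_filter.1 (hmem i)).2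
  set d : Fin m → ℕ := fun i =>
    if h : (i : ℕ) = 0 then t i - (m + 1)
    else t i - (t ⟨(i : ℕ) - 1, by omega⟩ + 1) with hd
  have key : ∀ k, (hk : k < m) → bgv m d ⟨k, hk⟩ = t ⟨k, hk⟩ := by
    intro k
    induction k with
    | zero =>
        intro hk
        have h0 : m + 1 ≤ t ⟨0, hk⟩ := htm _
        have hd0 : d ⟨0, hk⟩ = t ⟨0, hk⟩ - (m + 1) := by simp [hd]
        have : bgv m d ⟨0, hk⟩ = m + 1 + d ⟨0, hk⟩ := by
          show m + 1 + 0 + (∑ j ∈ Finset.range (0 + 1), dd m d j) = _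
          have : ∑ j ∈ Finset.range (0 + 1), dd m d j = dd m d 0 := by
            simp [Finset.sum_range_one]
          rw [this]
          have : dd m d 0 = d ⟨0, hk⟩ := by simp [dd, hk]
          omega
        omega
    | succ n ih =>
        intro hk
        have hn : n < m := by omega
        have ihn := ih hn
        have hlt : t ⟨n, hn⟩ + 1 ≤ t ⟨n + 1, hk⟩ :=
          htmono (show (⟨n, hn⟩ : Fin m) < ⟨n + 1, hk⟩ by simp [Fin.lt_def])
        have hddn1 : dd m d (n + 1) = t ⟨n + 1, hk⟩ - (t ⟨n, hn⟩ + 1) := by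
          have h1 : dd m d (n + 1) = d ⟨n + 1, hk⟩ := by simp [dd, hk]
          rw [h1, hd]
          simp only []
          rw [dif_neg (by simp)]
          congr 1
        have hsum : ∑ j ∈ Finset.range (n + 1 + 1), dd m d j
            = (∑ j ∈ Finset.range (n + 1), dd m d j) + dd m d (n + 1) :=
          Finset.sum_range_succ _ _
        have hb1 : bgv m d ⟨n + 1, hk⟩
            = m + 1 + (n + 1) + ∑ j ∈ Finset.range (n + 1 + 1), dd m d j := rfl
        have hb0 : bgv m d ⟨n, hn⟩
            = m + 1 + n + ∑ j ∈ Finset.range (n + 1), dd m d j := rfl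
        omega
  have hbgt : ∀ i : Fin m, bg m d i = e i := by
    intro i
    have := key (i : ℕ) i.isLt
    have h2 : bgv m d i = t i := by
      simpa [Fin.eta] using this
    exact PNat.coe_injective (by simpa using h2)
  have himg : Finset.image (bg m d) Finset.univ = big := by
    have hsub : Finset.image (bg m d) Finset.univ ⊆ big := by
      intro x hx
      obtain ⟨i, _, rfl⟩ := Finset.mem_image.1 hx
      rw [hbgt i]; exact hmem i
    exact Finset.eq_of_subset_of_card_le hsub (by rw [hc, card_big])
  set A : Finset (Fin m) := Finset.univ.filter (fun i => sm m i ∈ S) with hA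
  have hsmall : A.image (sm m) = S.filter (fun s : ℕ+ => ¬ m < (s : ℕ)) := by
    ext x
    simp only [hA, Finset.mem_image, Finset.mem_filter, Finset.mem_univ, true_and]
    constructor
    · rintro ⟨i, hi, rfl⟩
      exact ⟨hi, by simpa using sm_le m i⟩
    · rintro ⟨hx, hle⟩
      have hx1 : 1 ≤ (x : ℕ) := x.2
      have hxm : (x : ℕ) ≤ m := by omega
      refine ⟨⟨(x : ℕ) - 1, by omega⟩, ?_, ?_⟩
      · have : sm m ⟨(x : ℕ) - 1, by omega⟩ = x := PNat.coe_injective (by simp; omega)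
        rw [this]; exact hx
      · exact PNat.coe_injective (by simp; omega)
  refine ⟨(A, d), ?_⟩
  apply Subtype.ext
  show toSet m A d = S
  unfold toSet
  rw [hsmall, himg, hbigdef, Finset.union_comm]
  exact Finset.filter_union_filter_not_eq _ S


lemma toSet_disjoint (A : Finset (Fin m)) (d : Fin m → ℕ) :
    Disjoint (A.image (sm m)) (Finset.image (bg m d) Finset.univ) := by
  rw [Finset.disjoint_left]
  rintro x hx hy
  obtain ⟨i, _, rfl⟩ := Finset.mem_image.1 hx
  obtain ⟨j, _, hj⟩ := Finset.mem_image.1 hy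
  have h1 := sm_le m i
  have h2 := m_lt_bgv m d j
  have : (bg m d j : ℕ) = (sm m i : ℕ) := congrArg _ hj
  simp only [bg_coe, sm_coe] at this
  omega

lemma card_toSet (A : Finset (Fin m)) (d : Fin m → ℕ) :
    (toSet m A d).card = A.card + m := by
  unfold toSet
  rw [Finset.card_union_of_disjoint (toSet_disjoint m A d),
    Finset.card_image_of_injective _ (sm_injective m), card_big]

lemma sum_tri (n : ℕ) (f : ℕ → ℕ) :
    ∑ k ∈ Finset.range n, ∑ j ∈ Finset.range (k + 1), f j
      = ∑ j ∈ Finset.range n, (n - j) * f j := by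
  induction n with
  | zero => simp
  | succ n ih =>
      have h1 : ∑ j ∈ Finset.range (n + 1), (n + 1 - j) * f j
          = (∑ j ∈ Finset.range n, (n - j) * f j) + ∑ j ∈ Finset.range (n + 1), f j := by
        rw [Finset.sum_range_succ (fun j => (n + 1 - j) * f j), Finset.sum_range_succ f]
        have h2 : ∑ j ∈ Finset.range n, (n + 1 - j) * f j
            = ∑ j ∈ Finset.range n, ((n - j) * f j + f j) := by
          refine Finset.sum_congr rfl fun j hj => ?_
          have := Finset.mem_range.1 hj
          have h3 : n + 1 - j = (n - j) + 1 := by omega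
          rw [h3]; ring
        rw [h2, Finset.sum_add_distrib]
        have h4 : n + 1 - n = 1 := by omega
        rw [h4, one_mul]
        ring
      rw [Finset.sum_range_succ (fun k => ∑ j ∈ Finset.range (k + 1), f j), ih, h1]

lemma sum_base (n : ℕ) : ∑ k ∈ Finset.range n, (n + 1 + k) = n * (3 * n + 1) / 2 := by
  have hg := Finset.sum_range_id_mul_two n
  have hsplit : ∑ k ∈ Finset.range n, (n + 1 + k)
      = n * (n + 1) + ∑ k ∈ Finset.range n, k := by
    rw [Finset.sum_add_distrib, Finset.sum_const, Finset.card_range, smul_eq_mul]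
  have h2 : (∑ k ∈ Finset.range n, (n + 1 + k)) * 2 = n * (3 * n + 1) := by
    rw [hsplit]
    cases n with
    | zero => simp
    | succ p =>
        have hg' : (∑ i ∈ Finset.range (p + 1), i) * 2 = (p + 1) * p := by
          simpa using hg
        zify at hg' ⊢
        linear_combination hg'
  generalize hN : n * (3 * n + 1) = N at h2 ⊢
  omega

lemma sum_bgv (d : Fin m → ℕ) :
    ∑ i : Fin m, bgv m d i
      = m * (3 * m + 1) / 2 + ∑ j : Fin m, (m - (j : ℕ)) * d j := by
  have h1 : ∑ i : Fin m, bgv m d i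
      = ∑ k ∈ Finset.range m, (m + 1 + k + ∑ j ∈ Finset.range (k + 1), dd m d j) :=
    Fin.sum_univ_eq_sum_range (fun k => m + 1 + k + ∑ j ∈ Finset.range (k + 1), dd m d j) m
  rw [h1, Finset.sum_add_distrib, sum_base, sum_tri]
  congr 1
  rw [← Fin.sum_univ_eq_sum_range (fun j => (m - j) * dd m d j) m]
  exact Finset.sum_congr rfl (fun j _ => by rw [dd_fin])

lemma sum_toSet (A : Finset (Fin m)) (d : Fin m → ℕ) :
    ∑ s ∈ toSet m A d, (s : ℕ)
      = (∑ i ∈ A, ((i : ℕ) + 1))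
        + (m * (3 * m + 1) / 2 + ∑ j : Fin m, (m - (j : ℕ)) * d j) := by
  unfold toSet
  rw [Finset.sum_union (toSet_disjoint m A d),
    Finset.sum_image (fun i _ j _ h => sm_injective m h),
    Finset.sum_image (fun i _ j _ h => (bg_strictMono m d).injective h)]
  simp only [sm_coe, bg_coe]
  rw [← sum_bgv m d]

/-- tsum over a finite product of copies of ℕ of a product of functions. -/
lemma pi_tsum (n : ℕ) (f : Fin n → ℕ → ℂ) (hf : ∀ i, Summable fun k => ‖f i k‖) :
    Summable (fun d : Fin n → ℕ => ‖∏ i, f i (d i)‖) ∧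
      (∑' d : Fin n → ℕ, ∏ i, f i (d i)) = ∏ i, ∑' k, f i k := by
  induction n with
  | zero =>
      haveI : Unique (Fin 0 → ℕ) := Pi.uniqueOfIsEmpty _
      haveI : Finite (Fin 0 → ℕ) := Finite.of_subsingleton
      refine ⟨Summable.of_finite, ?_⟩
      rw [tsum_eq_single (default : Fin 0 → ℕ) (fun b hb => absurd (Subsingleton.elim b default) hb)]
      simp
  | succ n ih =>
      obtain ⟨hs, ht⟩ := ih (fun i => f i.succ) (fun i => hf i.succ)
      have hnorm0 := hf 0
      set e : ℕ × (Fin n → ℕ) ≃ (Fin (n + 1) → ℕ) := Fin.consEquiv (fun _ => ℕ) with hed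
      have hcons : ∀ p : ℕ × (Fin n → ℕ),
          ∏ i, f i (e p i) = f 0 p.1 * ∏ i : Fin n, f i.succ (p.2 i) := by
        intro p
        rw [Fin.prod_univ_succ]
        simp [hed, Fin.consEquiv]
      have hprod : Summable (fun p : ℕ × (Fin n → ℕ) =>
          ‖f 0 p.1 * ∏ i : Fin n, f i.succ (p.2 i)‖) := by
        have := Summable.mul_of_nonneg hnorm0 hs
          (fun _ => norm_nonneg _) (fun _ => norm_nonneg _)
        refine this.congr fun p => ?_
        rw [norm_mul]
      constructor
      · refine (Equiv.summable_iff e (f := fun d : Fin (n + 1) → ℕ => ‖∏ i, f i (d i)‖)).1 ?_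
        refine hprod.congr fun p => ?_
        show ‖f 0 p.1 * ∏ i : Fin n, f i.succ (p.2 i)‖ = ‖∏ i, f i (e p i)‖
        rw [hcons p]
      · calc (∑' d : Fin (n + 1) → ℕ, ∏ i, f i (d i))
            = ∑' p : ℕ × (Fin n → ℕ), ∏ i, f i (e p i) := (e.tsum_eq _).symm
          _ = ∑' p : ℕ × (Fin n → ℕ), f 0 p.1 * ∏ i : Fin n, f i.succ (p.2 i) :=
              tsum_congr hcons
          _ = (∑' k, f 0 k) * ∑' d' : Fin n → ℕ, ∏ i : Fin n, f i.succ (d' i) :=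
              (tsum_mul_tsum_of_summable_norm hnorm0 hs).symm
          _ = ∏ i : Fin (n + 1), ∑' k, f i k := by
              rw [ht, Fin.prod_univ_succ]

end RankMAux

open RankMAux in
/-- Generating function for rank-`m` tilings with `b(m) = m`:
the sum of `z^|S| q^(Σ_{s∈S} s)` over such finite subsets `S` of `ℤ_{>0}` is
`((-zq;q)_m/(q;q)_m) z^m q^{m(3m+1)/2}`. -/
theorem rank_m_case_one_generating_function (m : ℕ) (hm : 0 < m)
    (q z : ℂ) (hq : ‖q‖ < 1) :
    (∑' S : {S : Finset ℕ+ //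
        (S.filter (fun s : ℕ+ => m < (s : ℕ))).card = m},
      z ^ (S : Finset ℕ+).card * q ^ (∑ s ∈ (S : Finset ℕ+), (s : ℕ))) =
    ((∏ i ∈ Finset.range m, (1 + z * q ^ (i + 1))) /
        (∏ i ∈ Finset.range m, (1 - q ^ (i + 1)))) *
      z ^ m * q ^ (m * (3 * m + 1) / 2) := by
  classical
  have hqn : ‖q‖ < 1 := by exact hq
  set c : ℂ := z ^ m * q ^ (m * (3 * m + 1) / 2) with hc
  set f : Fin m → ℕ → ℂ := fun j k => (q ^ (m - (j : ℕ))) ^ k with hfd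
  have hlt : ∀ j : Fin m, ‖q ^ (m - (j : ℕ))‖ < 1 := by
    intro j
    rw [norm_pow]
    calc ‖q‖ ^ (m - (j : ℕ)) ≤ ‖q‖ ^ 1 :=
          pow_le_pow_of_le_one (norm_nonneg q) hqn.le (by have := j.isLt; omega)
      _ = ‖q‖ := pow_one _
      _ < 1 := hqn
  have hfn : ∀ j : Fin m, Summable fun k => ‖f j k‖ := by
    intro j
    have := summable_geometric_of_lt_one (norm_nonneg (q ^ (m - (j : ℕ)))) (hlt j)
    refine this.congr fun k => ?_
    simp [hfd, norm_pow]
  obtain ⟨hpis, hpit⟩ := pi_tsum m f hfn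
  have hbij : Function.Bijective (F m) := ⟨F_injective m, F_surjective m⟩
  rw [← Equiv.tsum_eq (Equiv.ofBijective (F m) hbij)]
  simp only [Equiv.ofBijective_apply]
  have hW : ∀ p : Finset (Fin m) × (Fin m → ℕ),
      z ^ ((F m p : Finset ℕ+)).card * q ^ (∑ s ∈ (F m p : Finset ℕ+), (s : ℕ))
      = (∏ i ∈ p.1, (z * q ^ ((i : ℕ) + 1))) * (c * ∏ j : Fin m, f j (p.2 j)) := by
    rintro ⟨A, d⟩
    show z ^ (toSet m A d).card * q ^ (∑ s ∈ toSet m A d, (s : ℕ)) = _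
    rw [card_toSet, sum_toSet, pow_add z, pow_add q]
    have hA : z ^ A.card * q ^ (∑ i ∈ A, ((i : ℕ) + 1))
        = ∏ i ∈ A, (z * q ^ ((i : ℕ) + 1)) := by
      rw [Finset.prod_mul_distrib, Finset.prod_const, Finset.prod_pow_eq_pow_sum]
    have hB : q ^ (m * (3 * m + 1) / 2 + ∑ j : Fin m, (m - (j : ℕ)) * d j)
        = q ^ (m * (3 * m + 1) / 2) * ∏ j : Fin m, f j (d j) := by
      rw [pow_add]
      congr 1
      rw [← Finset.prod_pow_eq_pow_sum]
      exact Finset.prod_congr rfl fun j _ => (pow_mul q _ _)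
    rw [hB, ← hA, hc]
    ring
  rw [tsum_congr hW]
  have hg1 : Summable fun A : Finset (Fin m) => ‖∏ i ∈ A, (z * q ^ ((i : ℕ) + 1))‖ :=
    Summable.of_finite
  have hg2 : Summable fun d : Fin m → ℕ => ‖c * ∏ j : Fin m, f j (d j)‖ := by
    refine (hpis.mul_left ‖c‖).congr fun d => ?_
    rw [hc]
    simp [norm_mul, mul_assoc]
  rw [← tsum_mul_tsum_of_summable_norm hg1 hg2]
  have h1 : (∑' A : Finset (Fin m), ∏ i ∈ A, (z * q ^ ((i : ℕ) + 1)))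
      = ∏ i ∈ Finset.range m, (1 + z * q ^ (i + 1)) := by
    rw [tsum_fintype]
    have hpa := Finset.prod_add (fun i : Fin m => z * q ^ ((i : ℕ) + 1))
      (fun _ => (1 : ℂ)) Finset.univ
    rw [Finset.powerset_univ] at hpa
    simp only [Finset.prod_const_one, mul_one] at hpa
    rw [← hpa, ← Fin.prod_univ_eq_prod_range (fun i => (1 : ℂ) + z * q ^ (i + 1)) m]
    exact Finset.prod_congr rfl fun i _ => by ring
  have h2 : (∑' d : Fin m → ℕ, c * ∏ j : Fin m, f j (d j))
      = c * (∏ i ∈ Finset.range m, (1 - q ^ (i + 1)))⁻¹ := by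
    rw [tsum_mul_left, hpit]
    congr 1
    have h3 : ∀ j : Fin m, (∑' k, f j k) = (1 - q ^ (m - (j : ℕ)))⁻¹ := fun j =>
      tsum_geometric_of_norm_lt_one (hlt j)
    rw [Finset.prod_congr rfl (fun j _ => h3 j), Finset.prod_inv_distrib]
    congr 1
    have h5 : ∏ x : Fin m, ((1 : ℂ) - q ^ (m - (x : ℕ)))
        = ∏ j ∈ Finset.range m, ((1 : ℂ) - q ^ (m - j)) :=
      Fin.prod_univ_eq_prod_range (fun k => (1 : ℂ) - q ^ (m - k)) m
    have h4 : ∏ j ∈ Finset.range m, ((1 : ℂ) - q ^ (m - j))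
        = ∏ j ∈ Finset.range m, ((1 : ℂ) - q ^ ((m - 1 - j) + 1)) := by
      refine Finset.prod_congr rfl fun j hj => ?_
      have := Finset.mem_range.1 hj
      rw [show m - j = (m - 1 - j) + 1 by omega]
    rw [h5, h4]
    exact Finset.prod_range_reflect (fun i => (1 : ℂ) - q ^ (i + 1)) m
  rw [h1, h2, hc, div_eq_mul_inv]
  ring
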